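/- arXiv:1504.04820 — 2 statements merged into one kernel-verified Lean document; each statement's English description precedes it below -/
import Mathlib

section
/- Let G be a connected graph such that its complement G^c is connected and has diameter 2, and let S be a set of vertices. Then S is a simultaneous strong metric generator for {G, G^c} if and only if S is a strong resolving cover of G. Hence Sd_s(G,G^c) = β_s(G). -/
open SimpleGraph

variable {V : Type*}

/-- `w` strongly resolves `u` and `v` in `G`. -/
def StronglyResolves (G : SimpleGraph V) (w u v : V) : Prop :=
  G.dist u w = G.dist u v + G.dist v w ∨ G.dist v w = G.dist v u + G.dist u w

/-- `S` is a strong metric generator for `G`. -/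
def IsStrongMetricGen (G : SimpleGraph V) (S : Set V) : Prop :=
  ∀ u v : V, u ≠ v → ∃ w ∈ S, StronglyResolves G w u v

/-- The simultaneous strong metric dimension of a family of graphs. -/
noncomputable def SdS (𝒢 : Set (SimpleGraph V)) : ℕ :=
  sInf {n | ∃ S : Set V, S.ncard = n ∧ ∀ G ∈ 𝒢, IsStrongMetricGen G S}

/-- The strong metric dimension of a single graph. -/
noncomputable def sdim (G : SimpleGraph V) : ℕ := SdS {G}

/-- `u` is maximally distant from `v` in `G`. -/
def MaxDistantFrom (G : SimpleGraph V) (u v : V) : Prop :=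
  ∀ w : V, G.Adj u w → G.dist v w ≤ G.dist v u

/-- `u` and `v` are mutually maximally distant in `G`. -/
def MutuallyMaxDistant (G : SimpleGraph V) (u v : V) : Prop :=
  MaxDistantFrom G u v ∧ MaxDistantFrom G v u

/-- The strong resolving graph of `G`. -/
def SRG (G : SimpleGraph V) : SimpleGraph V where
  Adj u v := u ≠ v ∧ MutuallyMaxDistant G u v
  symm := by
    constructor
    intro u v h
    exact ⟨h.1.symm, h.2.2, h.2.1⟩
  loopless := by constructor; intro u h; exact h.1 rfl

/-- The boundary of `G`: vertices mutually maximally distant from some vertex. -/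
def Boundary (G : SimpleGraph V) : Set V :=
  {u | ∃ v, MutuallyMaxDistant G u v}

/-- `S` is a vertex cover of `G`. -/
def IsVertexCover (G : SimpleGraph V) (S : Set V) : Prop :=
  ∀ u v : V, G.Adj u v → u ∈ S ∨ v ∈ S

/-- The vertex cover number. -/
noncomputable def vcNum (G : SimpleGraph V) : ℕ :=
  sInf {n | ∃ S : Set V, S.ncard = n ∧ _root_.IsVertexCover G S}

/-- A strong resolving cover: simultaneously a vertex cover and a strong metric generator. -/
def IsStrongResCover (G : SimpleGraph V) (S : Set V) : Prop :=
  _root_.IsVertexCover G S ∧ IsStrongMetricGen G S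

/-- The strong resolving cover number `β_s`. -/
noncomputable def betaS (G : SimpleGraph V) : ℕ :=
  sInf {n | ∃ S : Set V, S.ncard = n ∧ IsStrongResCover G S}

/-- `G` is 2-antipodal. -/
def TwoAntipodal (G : SimpleGraph V) : Prop :=
  ∀ x : V, ∃! y : V, G.dist x y = G.diam

/-- `v` is a leaf of `G` (degree one). -/
def IsLeaf (G : SimpleGraph V) (v : V) : Prop := ∃! w : V, G.Adj v w
lemma resolves_left (G : SimpleGraph V) (u v : V) : StronglyResolves G u u v :=
  Or.inr (by simp [SimpleGraph.dist_self])

lemma resolves_right (G : SimpleGraph V) (u v : V) : StronglyResolves G v u v :=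
  Or.inl (by simp [SimpleGraph.dist_self])

lemma exists_adj_dist {G : SimpleGraph V} (hG : G.Connected) {u v : V} (h : u ≠ v) :
    ∃ z, G.Adj u z ∧ G.dist z v + 1 = G.dist u v := by
  obtain ⟨p, hp⟩ := (hG u v).exists_walk_length_eq_dist
  cases p with
  | nil => exact absurd rfl h
  | cons hadj q =>
    rename_i z
    refine ⟨z, hadj, ?_⟩
    have h1 : G.dist z v ≤ q.length := SimpleGraph.dist_le q
    have h2 : G.dist u v ≤ G.dist u z + G.dist z v := hG.dist_triangle
    have h3 : G.dist u z = 1 := SimpleGraph.dist_eq_one_iff_adj.mpr hadj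
    simp only [SimpleGraph.Walk.length_cons] at hp
    omega

lemma dist_compl_eq_two {G : SimpleGraph V} (hGc : Gᶜ.Connected) (hd : Gᶜ.diam = 2)
    {u v : V} (hadj : G.Adj u v) : Gᶜ.dist u v = 2 := by
  have h0 : 0 < Gᶜ.dist u v := hGc.pos_dist_of_ne hadj.ne
  have h1 : Gᶜ.dist u v ≠ 1 := by
    intro e
    exact ((G.compl_adj u v).mp (SimpleGraph.dist_eq_one_iff_adj.mp e)).2 hadj
  have h2 : Gᶜ.dist u v ≤ 2 := by
    rw [← hd]
    exact SimpleGraph.dist_le_diam (SimpleGraph.ediam_ne_top_of_diam_ne_zero (by rw [hd]; omega))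
  omega

theorem stmt13 [Fintype V] (G : SimpleGraph V) (hG : G.Connected) (hGc : Gᶜ.Connected)
    (hd : Gᶜ.diam = 2) :
    (∀ S : Set V,
      (IsStrongMetricGen G S ∧ IsStrongMetricGen Gᶜ S) ↔ IsStrongResCover G S) ∧
    SdS {G, Gᶜ} = betaS G := by
  have hdle : ∀ a b : V, Gᶜ.dist a b ≤ 2 := by
    intro a b
    rw [← hd]
    exact SimpleGraph.dist_le_diam (SimpleGraph.ediam_ne_top_of_diam_ne_zero (by rw [hd]; omega))
  have key : ∀ S : Set V,
      (IsStrongMetricGen G S ∧ IsStrongMetricGen Gᶜ S) ↔ IsStrongResCover G S := by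
    intro S
    constructor
    · rintro ⟨hgG, hgGc⟩
      refine ⟨?_, hgG⟩
      intro u v huv
      obtain ⟨w, hwS, hw⟩ := hgGc u v huv.ne
      have h2 : Gᶜ.dist u v = 2 := dist_compl_eq_two hGc hd huv
      have hle1 : Gᶜ.dist u w ≤ 2 := hdle u w
      have hle2 : Gᶜ.dist v w ≤ 2 := hdle v w
      rcases hw with hw | hw
      · right
        have h0 : Gᶜ.dist v w = 0 := by rw [h2] at hw; omega
        have := hGc.dist_eq_zero_iff.mp h0
        rw [this]; exact hwS
      · left
        have h2' : Gᶜ.dist v u = 2 := by rwa [SimpleGraph.dist_comm]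
        have h0 : Gᶜ.dist u w = 0 := by rw [h2'] at hw; omega
        have := hGc.dist_eq_zero_iff.mp h0
        rw [this]; exact hwS
    · rintro ⟨hcov, hgen⟩
      refine ⟨hgen, ?_⟩
      intro u v hne
      by_cases hadj : G.Adj u v
      · rcases hcov u v hadj with h | h
        · exact ⟨u, h, resolves_left _ _ _⟩
        · exact ⟨v, h, resolves_right _ _ _⟩
      · have hduv : Gᶜ.dist u v = 1 :=
          SimpleGraph.dist_eq_one_iff_adj.mpr ((G.compl_adj u v).mpr ⟨hne, hadj⟩)
        by_cases htw : ∃ z, (G.Adj u z ∧ ¬ G.Adj v z) ∨ (G.Adj v z ∧ ¬ G.Adj u z)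
        · obtain ⟨z, hz | hz⟩ := htw
          · rcases hcov u z hz.1 with h | h
            · exact ⟨u, h, resolves_left _ _ _⟩
            · refine ⟨z, h, Or.inl ?_⟩
              have hvz : Gᶜ.dist v z = 1 := by
                refine SimpleGraph.dist_eq_one_iff_adj.mpr ((G.compl_adj v z).mpr ⟨?_, hz.2⟩)
                rintro rfl; exact hadj hz.1
              rw [dist_compl_eq_two hGc hd hz.1, hduv, hvz]
          · rcases hcov v z hz.1 with h | h
            · exact ⟨v, h, resolves_right _ _ _⟩
            · refine ⟨z, h, Or.inr ?_⟩
              have huz : Gᶜ.dist u z = 1 := by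
                refine SimpleGraph.dist_eq_one_iff_adj.mpr ((G.compl_adj u z).mpr ⟨?_, hz.2⟩)
                rintro rfl; exact hadj hz.1.symm
              have hvu : Gᶜ.dist v u = 1 := by rwa [SimpleGraph.dist_comm]
              rw [dist_compl_eq_two hGc hd hz.1, hvu, huz]
        · have htw' : ∀ z, G.Adj u z ↔ G.Adj v z := by
            intro z
            constructor
            · intro h; by_contra h'; exact htw ⟨z, Or.inl ⟨h, h'⟩⟩
            · intro h; by_contra h'; exact htw ⟨z, Or.inr ⟨h, h'⟩⟩
          obtain ⟨w, hwS, hw⟩ := hgen u v hne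
          have hwuv : w = u ∨ w = v := by
            rcases hw with hw | hw
            · right
              by_contra hwv
              obtain ⟨z, hvz, hz⟩ := exists_adj_dist hG (fun h : v = w => hwv h.symm)
              have huz : G.dist u z = 1 :=
                SimpleGraph.dist_eq_one_iff_adj.mpr ((htw' z).mpr hvz)
              have htri : G.dist u w ≤ G.dist u z + G.dist z w := hG.dist_triangle
              have hpos : 0 < G.dist u v := hG.pos_dist_of_ne hne
              omega
            · left
              by_contra hwu
              obtain ⟨z, huz, hz⟩ := exists_adj_dist hG (fun h : u = w => hwu h.symm)
              have hvz : G.dist v z = 1 :=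
                SimpleGraph.dist_eq_one_iff_adj.mpr ((htw' z).mp huz)
              have htri : G.dist v w ≤ G.dist v z + G.dist z w := hG.dist_triangle
              have hpos : 0 < G.dist v u := hG.pos_dist_of_ne hne.symm
              omega
          rcases hwuv with rfl | rfl
          · exact ⟨w, hwS, resolves_left _ _ _⟩
          · exact ⟨w, hwS, resolves_right _ _ _⟩
  refine ⟨key, ?_⟩
  unfold SdS betaS
  congr 1
  ext n
  simp only [Set.mem_setOf_eq]
  constructor
  · rintro ⟨S, hn, hS⟩
    exact ⟨S, hn, (key S).mp ⟨hS G (Or.inl rfl), hS Gᶜ (Or.inr rfl)⟩⟩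
  · rintro ⟨S, hn, hS⟩
    refine ⟨S, hn, ?_⟩
    intro H hH
    obtain ⟨h1, h2⟩ := (key S).mpr hS
    simp only [Set.mem_insert_iff, Set.mem_singleton_iff] at hH
    rcases hH with rfl | rfl
    · exact h1
    · exact h2
end

section
/- Let T be a tree of order n with diameter 3. Then Sd_s(T, T^c) = n − 2. -/
open SimpleGraph

variable {V : Type*}

lemma gdist_le2 {G : SimpleGraph V} {a m b : V} (h1 : G.Adj a m) (h2 : G.Adj m b) :
    G.dist a b ≤ 2 := by
  have := G.dist_le (Walk.cons h1 (Walk.cons h2 Walk.nil))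
  simpa using this

lemma gdist_eq2 {G : SimpleGraph V} {a b : V} (h : G.dist a b = 2) :
    ∃ m, G.Adj a m ∧ G.Adj m b := by
  obtain ⟨p, hp⟩ := exists_walk_of_dist_ne_zero (by omega : G.dist a b ≠ 0)
  rw [h] at hp
  cases p with
  | nil => simp at hp
  | cons h1 q =>
    cases q with
    | nil => simp at hp
    | cons h2 r =>
      cases r with
      | nil => exact ⟨_, h1, h2⟩
      | cons h3 s => simp [Walk.length_cons] at hp

lemma gdist3_walk {G : SimpleGraph V} {a b : V} (h : G.dist a b = 3) :
    ∃ m k, G.Adj a m ∧ G.Adj m k ∧ G.Adj k b := by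
  obtain ⟨p, hp⟩ := exists_walk_of_dist_ne_zero (by omega : G.dist a b ≠ 0)
  rw [h] at hp
  cases p with
  | nil => simp at hp
  | cons h1 q =>
    cases q with
    | nil => simp at hp
    | cons h2 r =>
      cases r with
      | nil => simp at hp
      | cons h3 s =>
        cases s with
        | nil => exact ⟨_, _, h1, h2, h3⟩
        | cons h4 t => simp [Walk.length_cons] at hp

lemma tree_adj_dist_ne [DecidableEq V] {G : SimpleGraph V} (hT : G.IsTree) {a a' : V} (hadj : G.Adj a a')
    (v : V) : G.dist v a ≠ G.dist v a' := by
  intro heq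
  have hc := hT.isConnected
  by_cases h0 : G.dist v a = 0
  · have hva : v = a := (hc.dist_eq_zero_iff).mp h0
    have hva' : v = a' := (hc.dist_eq_zero_iff).mp (heq ▸ h0)
    exact hadj.ne (hva ▸ hva' ▸ rfl)
  · obtain ⟨P, hPpath, hPlen⟩ := hc.exists_path_of_dist v a
    have hns : a' ∉ P.support := by
      intro hmem
      have h1 : G.dist v a' ≤ (P.takeUntil a' hmem).length := G.dist_le _
      have h2 : (P.takeUntil a' hmem).length + (P.dropUntil a' hmem).length = P.length := by
        have := congrArg Walk.length (P.take_spec hmem)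
        rw [Walk.length_append] at this
        exact this
      have h3 : (P.dropUntil a' hmem).length ≠ 0 := by
        intro hz
        exact hadj.ne.symm (Walk.eq_of_length_eq_zero hz)
      omega
    have hQpath : (Walk.cons hadj.symm P.reverse).IsPath := by
      rw [Walk.cons_isPath_iff]
      exact ⟨hPpath.reverse, by simpa using hns⟩
    obtain ⟨Q, hQ, hQlen⟩ := hc.exists_path_of_dist a' v
    have := (hT.existsUnique_path a' v).unique hQpath hQ
    have hlen := congrArg Walk.length this
    simp only [Walk.length_cons, Walk.length_reverse] at hlen
    rw [hPlen, hQlen] at hlen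
    have hcm : G.dist a' v = G.dist v a' := SimpleGraph.dist_comm
    omega

/-- `v` is a leaf with unique neighbour `h`. -/
def leafAt (T : SimpleGraph V) (v h : V) : Prop := ∀ u, T.Adj v u ↔ u = h

lemma leaf_unique {T : SimpleGraph V} (hT : T.IsTree) {p q v : V} (hpq : T.Adj p q)
    (hall : ∀ u, u ≠ p → u ≠ q → T.Adj u p ∨ T.Adj u q)
    (hvp : v ≠ p) (hvq : v ≠ q) (hadj : T.Adj v p) : leafAt T v p := by
  intro u
  constructor
  · intro hu
    by_contra hub
    -- u ≠ p; get T.Adj u p ∨ T.Adj u q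
    have hup : u ≠ p := hub
    have huv : v ≠ u := fun h => (h ▸ hu).ne rfl
    rcases (em (u = q)) with rfl | huq
    · -- u = q : two paths from v to q : [v,q] and [v,p,q]
      have hP1 : (Walk.cons hu Walk.nil : T.Walk v u).IsPath := by
        simp [Walk.isPath_def, hu.ne]
      have hP2 : (Walk.cons hadj (Walk.cons hpq Walk.nil) : T.Walk v u).IsPath := by
        simp [Walk.isPath_def, hadj.ne, hvq, hpq.ne]
      have := (hT.existsUnique_path v u).unique hP1 hP2
      have hs := congrArg Walk.support this
      simp [Walk.support_cons] at hs
    · rcases hall u hup huq with hupadj | huqadj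
      · -- two paths v→p : [v,p] and [v,u,p]
        have hP1 : (Walk.cons hadj Walk.nil : T.Walk v p).IsPath := by
          simp [Walk.isPath_def, hvp]
        have hP2 : (Walk.cons hu (Walk.cons hupadj Walk.nil) : T.Walk v p).IsPath := by
          simp [Walk.isPath_def, huv, hvp, hup]
        have := (hT.existsUnique_path v p).unique hP1 hP2
        have hs := congrArg Walk.support this
        simp [Walk.support_cons] at hs
      · -- two paths v→q : [v,p,q] and [v,u,q]
        have hP1 : (Walk.cons hadj (Walk.cons hpq Walk.nil) : T.Walk v q).IsPath := by
          simp [Walk.isPath_def, hvp, hvq, hpq.ne]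
        have hP2 : (Walk.cons hu (Walk.cons huqadj Walk.nil) : T.Walk v q).IsPath := by
          simp [Walk.isPath_def, huv, hvq, huq]
        have := (hT.existsUnique_path v q).unique hP1 hP2
        have hs := congrArg Walk.support this
        simp [Walk.support_cons] at hs
        exact hub hs.symm
  · rintro rfl; exact hadj

lemma tree_struct [Fintype V] [DecidableEq V] (T : SimpleGraph V) (hT : T.IsTree)
    (hd : T.diam = 3) :
    ∃ b c : V, T.Adj b c ∧ (∃ x, leafAt T x b ∧ x ≠ c) ∧ (∃ y, leafAt T y c ∧ y ≠ b) ∧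
      (∀ v, v = b ∨ v = c ∨ leafAt T v b ∨ leafAt T v c) := by
  have hc := hT.isConnected
  have hne : Nonempty V := hc.nonempty
  have hetop : T.ediam ≠ ⊤ := T.ediam_ne_top_of_diam_ne_zero (by omega)
  have hd3 : ∀ u v, T.dist u v ≤ 3 := fun u v => hd ▸ dist_le_diam hetop
  obtain ⟨x, y, hxy⟩ := T.exists_dist_eq_diam
  rw [hd] at hxy
  obtain ⟨b, c, hxb, hbc, hcy⟩ := gdist3_walk hxy
  -- basic distance facts
  have hxc_ne : x ≠ c := by
    rintro rfl
    rw [(dist_eq_one_iff_adj).mpr hcy] at hxy; omega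
  have hby_ne : b ≠ y := by
    rintro rfl
    rw [(dist_eq_one_iff_adj).mpr hxb] at hxy; omega
  have hnxc : ¬T.Adj x c := fun h => by have := gdist_le2 h hcy; omega
  have hnby : ¬T.Adj b y := fun h => by have := gdist_le2 hxb h; omega
  have dxc : T.dist x c = 2 := by
    have h1 := gdist_le2 hxb hbc
    have h2 : T.dist x c ≠ 0 := fun h => hxc_ne (hc.dist_eq_zero_iff.mp h)
    have h3 : T.dist x c ≠ 1 := fun h => hnxc (dist_eq_one_iff_adj.mp h)
    omega
  have dby : T.dist b y = 2 := by
    have h1 := gdist_le2 hbc hcy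
    have h2 : T.dist b y ≠ 0 := fun h => hby_ne (hc.dist_eq_zero_iff.mp h)
    have h3 : T.dist b y ≠ 1 := fun h => hnby (dist_eq_one_iff_adj.mp h)
    omega
  -- step 3 : every vertex other than b, c is adjacent to b or c
  have step3 : ∀ v, v ≠ b → v ≠ c → T.Adj v b ∨ T.Adj v c := by
    intro v hvb hvc
    by_contra hcon
    push_neg at hcon
    obtain ⟨hnvb, hnvc⟩ := hcon
    have hb0 : T.dist v b ≠ 0 := fun h => hvb (hc.dist_eq_zero_iff.mp h)
    have hb1 : T.dist v b ≠ 1 := fun h => hnvb (dist_eq_one_iff_adj.mp h)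
    have hc0 : T.dist v c ≠ 0 := fun h => hvc (hc.dist_eq_zero_iff.mp h)
    have hc1 : T.dist v c ≠ 1 := fun h => hnvc (dist_eq_one_iff_adj.mp h)
    have hb3 := hd3 v b
    have hc3 := hd3 v c
    have hnebc := tree_adj_dist_ne hT hbc v
    have htri1 : T.dist v b ≤ T.dist v c + T.dist c b := hc.dist_triangle
    have htri2 : T.dist v c ≤ T.dist v b + T.dist b c := hc.dist_triangle
    rw [(dist_eq_one_iff_adj).mpr hbc.symm] at htri1
    rw [(dist_eq_one_iff_adj).mpr hbc] at htri2
    have hcases : (T.dist v b = 2 ∧ T.dist v c = 3) ∨ (T.dist v b = 3 ∧ T.dist v c = 2) := by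
      omega
    rcases hcases with ⟨h2b, h3c⟩ | ⟨h3b, h2c⟩
    · -- d(v,y) = 2
      have hney := tree_adj_dist_ne hT hcy v
      have htri3 : T.dist v c ≤ T.dist v y + T.dist y c := hc.dist_triangle
      rw [(dist_eq_one_iff_adj).mpr hcy.symm] at htri3
      have hy3 := hd3 v y
      have dvy : T.dist v y = 2 := by omega
      obtain ⟨m, hvm, hmb⟩ := gdist_eq2 h2b
      obtain ⟨k, hvk, hky⟩ := gdist_eq2 dvy
      have hmc : m ≠ c := fun h => hnvc (h ▸ hvm)
      have hkc : k ≠ c := fun h => hnvc (h ▸ hvk)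
      have hvy : v ≠ y := by rintro rfl; rw [SimpleGraph.dist_self] at dvy; omega
      have hvb2 : v ≠ b := hvb
      have hP1 : (Walk.cons hvm (Walk.cons hmb (Walk.cons hbc Walk.nil)) : T.Walk v c).IsPath := by
        simp [Walk.isPath_def, hvm.ne, hvb, hvc, hmb.ne, hmc, hbc.ne]
      have hP2 : (Walk.cons hvk (Walk.cons hky (Walk.cons hcy.symm Walk.nil)) : T.Walk v c).IsPath := by
        simp [Walk.isPath_def, hvk.ne, hvy, hvc, hky.ne, hkc, hcy.ne']
      have := (hT.existsUnique_path v c).unique hP1 hP2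
      have hs := congrArg Walk.support this
      simp [Walk.support_cons] at hs
      exact hby_ne hs.2
    · -- d(v,x) = 2
      have hnex := tree_adj_dist_ne hT hxb v
      have htri3 : T.dist v b ≤ T.dist v x + T.dist x b := hc.dist_triangle
      rw [(dist_eq_one_iff_adj).mpr hxb] at htri3
      have hx3 := hd3 v x
      have dvx : T.dist v x = 2 := by omega
      obtain ⟨m, hvm, hmc⟩ := gdist_eq2 h2c
      obtain ⟨k, hvk, hkx⟩ := gdist_eq2 dvx
      have hmb : m ≠ b := fun h => hnvb (h ▸ hvm)
      have hkb : k ≠ b := fun h => hnvb (h ▸ hvk)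
      have hvx : v ≠ x := by rintro rfl; rw [SimpleGraph.dist_self] at dvx; omega
      have hP1 : (Walk.cons hvm (Walk.cons hmc (Walk.cons hbc.symm Walk.nil)) : T.Walk v b).IsPath := by
        simp [Walk.isPath_def, hvm.ne, hvc, hvb, hmc.ne, hmb, hbc.ne']
      have hP2 : (Walk.cons hvk (Walk.cons hkx (Walk.cons hxb Walk.nil)) : T.Walk v b).IsPath := by
        simp [Walk.isPath_def, hvk.ne, hvx, hvb, hkx.ne, hkb, hxb.ne]
      have := (hT.existsUnique_path v b).unique hP1 hP2
      have hs := congrArg Walk.support this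
      simp [Walk.support_cons] at hs
      exact hxc_ne hs.2.symm
  have step3' : ∀ u, u ≠ c → u ≠ b → T.Adj u c ∨ T.Adj u b := by
    intro u h1 h2
    exact (step3 u h2 h1).symm
  refine ⟨b, c, hbc, ⟨x, ?_, hxc_ne⟩, ⟨y, ?_, hby_ne.symm⟩, ?_⟩
  · exact leaf_unique hT hbc step3 hxb.ne hxc_ne hxb
  · exact leaf_unique hT hbc.symm step3' hcy.ne' hby_ne.symm hcy.symm
  · intro v
    by_cases hvb : v = b
    · exact Or.inl hvb
    by_cases hvc : v = c
    · exact Or.inr (Or.inl hvc)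
    rcases step3 v hvb hvc with h | h
    · exact Or.inr (Or.inr (Or.inl (leaf_unique hT hbc step3 hvb hvc h)))
    · exact Or.inr (Or.inr (Or.inr (leaf_unique hT hbc.symm step3' hvc hvb h)))
lemma gdist_le3 {G : SimpleGraph V} {a m k b : V} (h1 : G.Adj a m) (h2 : G.Adj m k)
    (h3 : G.Adj k b) : G.dist a b ≤ 3 := by
  have := G.dist_le (Walk.cons h1 (Walk.cons h2 (Walk.cons h3 Walk.nil)))
  simpa using this

def Hyp (T : SimpleGraph V) (b c : V) : Prop :=
  T.Adj b c ∧ (∃ x, leafAt T x b ∧ x ≠ c) ∧ (∃ y, leafAt T y c ∧ y ≠ b) ∧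
    (∀ v, v = b ∨ v = c ∨ leafAt T v b ∨ leafAt T v c)

namespace Hyp

variable {T : SimpleGraph V} {b c v w : V}

lemma symm (h : Hyp T b c) : Hyp T c b := by
  obtain ⟨h1, h2, h3, h4⟩ := h
  exact ⟨h1.symm, h3, h2, fun v => by rcases h4 v with h|h|h|h <;> tauto⟩

lemma adj (h : Hyp T b c) : T.Adj b c := h.1

lemma leaf_adj (h : Hyp T b c) (hv : leafAt T v b) : T.Adj v b := (hv b).mpr rfl

lemma leaf_nadj (h : Hyp T b c) (hv : leafAt T v b) : ¬T.Adj v c := by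
  intro ha
  exact h.adj.ne ((hv c).mp ha).symm

lemma leaf_ne_b (h : Hyp T b c) (hv : leafAt T v b) : v ≠ b := (h.leaf_adj hv).ne

lemma leaf_ne_c (h : Hyp T b c) (hv : leafAt T v b) : v ≠ c := by
  intro hvc
  obtain ⟨y, hy, hyb⟩ := h.2.2.1
  have hadj : T.Adj y c := (hy c).mpr rfl
  rw [← hvc] at hadj
  exact hyb ((hv y).mp hadj.symm)

lemma not_both (h : Hyp T b c) (hv : leafAt T v b) (hw : leafAt T v c) : False :=
  h.adj.ne ((hw b).mp (h.leaf_adj hv))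

lemma cross_ne (h : Hyp T b c) (hv : leafAt T v b) (hw : leafAt T w c) : v ≠ w := by
  rintro rfl
  exact h.not_both hv hw

lemma dist_bc (h : Hyp T b c) : T.dist b c = 1 := dist_eq_one_iff_adj.mpr h.adj

lemma dist_leaf_b (h : Hyp T b c) (hv : leafAt T v b) : T.dist v b = 1 :=
  dist_eq_one_iff_adj.mpr (h.leaf_adj hv)

lemma dist_leaf_c (h : Hyp T b c) (hc : T.Connected) (hv : leafAt T v b) :
    T.dist v c = 2 := by
  have h1 := gdist_le2 (h.leaf_adj hv) h.adj
  have h2 : T.dist v c ≠ 0 := fun hz => h.leaf_ne_c hv (hc.dist_eq_zero_iff.mp hz)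
  have h3 : T.dist v c ≠ 1 := fun hz => h.leaf_nadj hv (dist_eq_one_iff_adj.mp hz)
  omega

lemma dist_leaf_leaf_same (h : Hyp T b c) (hc : T.Connected) (hv : leafAt T v b)
    (hw : leafAt T w b) (hne : v ≠ w) : T.dist v w = 2 := by
  have h1 := gdist_le2 (h.leaf_adj hv) (h.leaf_adj hw).symm
  have h2 : T.dist v w ≠ 0 := fun hz => hne (hc.dist_eq_zero_iff.mp hz)
  have h3 : T.dist v w ≠ 1 := by
    intro hz
    exact h.leaf_ne_b hw ((hv w).mp (dist_eq_one_iff_adj.mp hz))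
  omega

lemma dist_leaf_leaf_cross (h : Hyp T b c) (hc : T.Connected)
    (hd3 : ∀ u v, T.dist u v ≤ 3) (hv : leafAt T v b) (hw : leafAt T w c) :
    T.dist v w = 3 := by
  have h1 := hd3 v w
  have h2 : T.dist v w ≠ 0 := fun hz => h.cross_ne hv hw (hc.dist_eq_zero_iff.mp hz)
  have h3 : T.dist v w ≠ 1 := by
    intro hz
    exact h.symm.leaf_ne_c hw ((hv w).mp (dist_eq_one_iff_adj.mp hz))
  have h4 : T.dist v w ≠ 2 := by
    intro hz
    obtain ⟨m, hvm, hmw⟩ := gdist_eq2 hz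
    have hmb : m = b := (hv m).mp hvm
    have hmc : m = c := (hw m).mp hmw.symm
    exact h.adj.ne (hmb ▸ hmc)
  omega

-- complement adjacencies
lemma cadj_cross (h : Hyp T b c) (hv : leafAt T v b) (hw : leafAt T w c) : Tᶜ.Adj v w := by
  rw [compl_adj]
  refine ⟨h.cross_ne hv hw, fun ha => ?_⟩
  exact h.symm.leaf_ne_c hw ((hv w).mp ha)

lemma cadj_same (h : Hyp T b c) (hv : leafAt T v b) (hw : leafAt T w b) (hne : v ≠ w) :
    Tᶜ.Adj v w := by
  rw [compl_adj]
  exact ⟨hne, fun ha => h.leaf_ne_b hw ((hv w).mp ha)⟩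

lemma cadj_leaf_c (h : Hyp T b c) (hv : leafAt T v b) : Tᶜ.Adj v c := by
  rw [compl_adj]
  exact ⟨h.leaf_ne_c hv, h.leaf_nadj hv⟩

lemma cnadj_leaf_b (h : Hyp T b c) (hv : leafAt T v b) : ¬Tᶜ.Adj v b := by
  rw [compl_adj]
  rintro ⟨-, hna⟩
  exact hna (h.leaf_adj hv)

lemma compl_connected (h : Hyp T b c) : Tᶜ.Connected := by
  obtain ⟨x, hx, hxc⟩ := h.2.1
  obtain ⟨y, hy, hyb⟩ := h.2.2.1
  have hreach : ∀ v, Tᶜ.Reachable v y := by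
    intro v
    rcases h.2.2.2 v with rfl | rfl | hv | hv
    · exact (h.symm.cadj_leaf_c hy).symm.reachable
    · exact ((h.cadj_leaf_c hx).symm.reachable).trans (h.cadj_cross hx hy).reachable
    · exact (h.cadj_cross hv hy).reachable
    · rcases eq_or_ne v y with rfl | hne
      · exact Reachable.refl _
      · exact (h.symm.cadj_same hv hy hne).reachable
  have : Nonempty V := ⟨b⟩
  exact ⟨fun u v => (hreach u).trans (hreach v).symm⟩

lemma cdist_cb (h : Hyp T b c) (hcc : Tᶜ.Connected) : Tᶜ.dist c b = 3 := by
  obtain ⟨x, hx, hxc⟩ := h.2.1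
  obtain ⟨y, hy, hyb⟩ := h.2.2.1
  have hle : Tᶜ.dist c b ≤ 3 :=
    gdist_le3 (h.cadj_leaf_c hx).symm (h.cadj_cross hx hy) (h.symm.cadj_leaf_c hy)
  have h0 : Tᶜ.dist c b ≠ 0 := fun hz => h.adj.ne (hcc.dist_eq_zero_iff.mp hz).symm
  have h1 : Tᶜ.dist c b ≠ 1 := by
    intro hz
    have := dist_eq_one_iff_adj.mp hz
    rw [compl_adj] at this
    exact this.2 h.adj.symm
  have h2 : Tᶜ.dist c b ≠ 2 := by
    intro hz
    obtain ⟨m, hcm, hmb⟩ := gdist_eq2 hz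
    rcases h.2.2.2 m with rfl | rfl | hm | hm
    · exact hmb.ne rfl
    · exact hcm.ne rfl
    · exact h.cnadj_leaf_b hm hmb
    · exact h.symm.cnadj_leaf_b hm hcm.symm
  omega

lemma cdist_c_leaf (h : Hyp T b c) (hcc : Tᶜ.Connected) (hw : leafAt T w c) :
    Tᶜ.dist c w = 2 := by
  obtain ⟨x, hx, hxc⟩ := h.2.1
  have hle : Tᶜ.dist c w ≤ 2 := gdist_le2 (h.cadj_leaf_c hx).symm (h.cadj_cross hx hw)
  have h0 : Tᶜ.dist c w ≠ 0 := fun hz =>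
    h.symm.leaf_ne_b hw (hcc.dist_eq_zero_iff.mp hz).symm
  have h1 : Tᶜ.dist c w ≠ 1 := by
    intro hz
    have := dist_eq_one_iff_adj.mp hz
    rw [compl_adj] at this
    exact this.2 (h.symm.leaf_adj hw).symm
  omega

end Hyp

lemma resolve_mmd {G : SimpleGraph V} (hc : G.Connected) {u v w : V}
    (hm : MutuallyMaxDistant G u v) (hr : StronglyResolves G w u v) : w = u ∨ w = v := by
  rcases hr with h | h
  · right; by_contra hne
    have h0 : G.dist v w ≠ 0 := fun hz => hne ((hc.dist_eq_zero_iff).mp hz).symm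
    obtain ⟨p, hp⟩ := exists_walk_of_dist_ne_zero h0
    cases p with
    | nil => simp at hp; omega
    | cons hadj q =>
      rename_i m
      have h1 : G.dist m w ≤ q.length := G.dist_le q
      have h2 : G.dist u m ≤ G.dist u v := hm.2 m hadj
      have h3 : G.dist u w ≤ G.dist u m + G.dist m w := hc.dist_triangle
      simp only [Walk.length_cons] at hp
      omega
  · left; by_contra hne
    have h0 : G.dist u w ≠ 0 := fun hz => hne ((hc.dist_eq_zero_iff).mp hz).symm
    obtain ⟨p, hp⟩ := exists_walk_of_dist_ne_zero h0
    cases p with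
    | nil => simp at hp; omega
    | cons hadj q =>
      rename_i m
      have h1 : G.dist m w ≤ q.length := G.dist_le q
      have h2 : G.dist v m ≤ G.dist v u := hm.1 m hadj
      have h3 : G.dist v w ≤ G.dist v m + G.dist m w := hc.dist_triangle
      simp only [Walk.length_cons] at hp
      omega

lemma Hyp.maxdf_leaves {T : SimpleGraph V} {b c u v : V} (h : Hyp T b c) (hc : T.Connected)
    (hd3 : ∀ u v, T.dist u v ≤ 3) (hu : leafAt T u b ∨ leafAt T u c)
    (hv : leafAt T v b ∨ leafAt T v c) (hne : u ≠ v) : MaxDistantFrom T u v := by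
  intro w hw
  rcases hu with hu | hu
  · have hwb : w = b := (hu w).mp hw
    subst hwb
    rcases hv with hv | hv
    · rw [h.dist_leaf_b hv, h.dist_leaf_leaf_same hc hv hu hne.symm]
      omega
    · rw [h.symm.dist_leaf_c hc hv, h.symm.dist_leaf_leaf_cross hc hd3 hv hu]
      omega
  · have hwc : w = c := (hu w).mp hw
    subst hwc
    rcases hv with hv | hv
    · rw [h.dist_leaf_c hc hv, h.dist_leaf_leaf_cross hc hd3 hv hu]
      omega
    · rw [h.symm.dist_leaf_b hv, h.symm.dist_leaf_leaf_same hc hv hu hne.symm]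
      omega

lemma Hyp.mmd_compl_bc {T : SimpleGraph V} {b c : V} (h : Hyp T b c) (hcc : Tᶜ.Connected) :
    MutuallyMaxDistant Tᶜ b c := by
  constructor
  · intro w hw
    rcases h.2.2.2 w with rfl | rfl | hwl | hwl
    · exact absurd hw (Tᶜ.loopless.irrefl w)
    · rw [compl_adj] at hw
      exact absurd h.adj hw.2
    · exact absurd hw.symm (h.cnadj_leaf_b hwl)
    · rw [h.cdist_c_leaf hcc hwl, h.cdist_cb hcc]
      omega
  · intro w hw
    rcases h.2.2.2 w with rfl | rfl | hwl | hwl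
    · rw [compl_adj] at hw
      exact absurd h.adj.symm hw.2
    · exact absurd hw (Tᶜ.loopless.irrefl w)
    · rw [h.symm.cdist_c_leaf hcc hwl, h.symm.cdist_cb hcc]
      omega
    · exact absurd hw.symm (h.symm.cnadj_leaf_b hwl)

theorem stmt18 [Fintype V] (T : SimpleGraph V) (hT : T.IsTree) (hd : T.diam = 3) :
    SdS {T, Tᶜ} = Fintype.card V - 2 := by
  classical
  have hc := hT.isConnected
  have hetop : T.ediam ≠ ⊤ := T.ediam_ne_top_of_diam_ne_zero (by omega)
  have hd3 : ∀ u v, T.dist u v ≤ 3 := fun u v => hd ▸ dist_le_diam hetop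
  obtain ⟨b, c, hbc, ⟨x, hx, hxc⟩, ⟨y, hy, hyb⟩, hclass⟩ := tree_struct T hT hd
  have h : Hyp T b c := ⟨hbc, ⟨x, hx, hxc⟩, ⟨y, hy, hyb⟩, hclass⟩
  have hcc : Tᶜ.Connected := h.compl_connected
  have hbc' : b ≠ c := hbc.ne
  have hxb : x ≠ b := h.leaf_ne_b hx
  have hyc : y ≠ c := h.symm.leaf_ne_b hy
  have hxy : x ≠ y := h.cross_ne hx hy
  have hcard : 4 ≤ Fintype.card V := by
    have h4 : ({b, c, x, y} : Finset V).card = 4 := by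
      rw [Finset.card_insert_of_notMem (by simp [hbc', hxb.symm, Ne.symm hyb]),
        Finset.card_insert_of_notMem (by simp [Ne.symm hxc, hyc.symm]),
        Finset.card_insert_of_notMem (by simp [hxy]), Finset.card_singleton]
    calc 4 = ({b, c, x, y} : Finset V).card := h4.symm
      _ ≤ Fintype.card V := Finset.card_le_univ _
  -- the distances used for the upper bound
  have dT1 : T.dist y c = 1 := h.symm.dist_leaf_b hy
  have dT2 : T.dist c x = 2 := by rw [SimpleGraph.dist_comm]; exact h.dist_leaf_c hc hx
  have dT3 : T.dist y x = 3 := by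
    rw [SimpleGraph.dist_comm]; exact h.dist_leaf_leaf_cross hc hd3 hx hy
  have dC1 : Tᶜ.dist c b = 3 := h.cdist_cb hcc
  have dC2 : Tᶜ.dist c y = 2 := h.cdist_c_leaf hcc hy
  have dC3 : Tᶜ.dist y b = 1 := by
    rw [dist_eq_one_iff_adj, compl_adj]
    exact ⟨hyb, fun ha => hbc' ((hy b).mp ha)⟩
  -- upper bound set
  have hmem : Fintype.card V - 2 ∈
      {k | ∃ S : Set V, S.ncard = k ∧ ∀ G ∈ ({T, Tᶜ} : Set (SimpleGraph V)),
        IsStrongMetricGen G S} := by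
    refine ⟨Set.univ \ {c, y}, ?_, ?_⟩
    · rw [Set.ncard_diff (Set.subset_univ _), Set.ncard_univ, Nat.card_eq_fintype_card,
        Set.ncard_pair hyc.symm]
    · intro G hG u v huv
      by_cases hvS : v ∈ Set.univ \ ({c, y} : Set V)
      · exact ⟨v, hvS, Or.inl (by simp)⟩
      by_cases huS : u ∈ Set.univ \ ({c, y} : Set V)
      · exact ⟨u, huS, Or.inr (by simp)⟩
      have hu' : u = c ∨ u = y := by
        by_cases h' : u = c
        · exact Or.inl h'
        · exact Or.inr (by simpa [Set.mem_diff, h'] using huS)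
      have hv' : v = c ∨ v = y := by
        by_cases h' : v = c
        · exact Or.inl h'
        · exact Or.inr (by simpa [Set.mem_diff, h'] using hvS)
      simp only [Set.mem_insert_iff, Set.mem_singleton_iff] at hG
      rcases hG with rfl | rfl
      · -- resolve {c, y} in T by x
        refine ⟨x, ⟨Set.mem_univ _, by simp [hxc, hxy]⟩, ?_⟩
        rcases hu' with rfl | rfl <;> rcases hv' with rfl | rfl
        · exact absurd rfl huv
        · exact Or.inr (by rw [dT3, dT1, dT2])
        · exact Or.inl (by rw [dT3, dT1, dT2])
        · exact absurd rfl huv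
      · -- resolve {c, y} in Tᶜ by b
        refine ⟨b, ⟨Set.mem_univ _, by simp [hbc', Ne.symm hyb]⟩, ?_⟩
        rcases hu' with rfl | rfl <;> rcases hv' with rfl | rfl
        · exact absurd rfl huv
        · exact Or.inl (by rw [dC1, dC2, dC3])
        · exact Or.inr (by rw [dC1, dC2, dC3])
        · exact absurd rfl huv
  -- lower bound
  have hlow : ∀ k ∈ {k | ∃ S : Set V, S.ncard = k ∧ ∀ G ∈ ({T, Tᶜ} : Set (SimpleGraph V)),
      IsStrongMetricGen G S}, Fintype.card V - 2 ≤ k := by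
    rintro k ⟨S, hScard, hSgen⟩
    have hgenT : IsStrongMetricGen T S := hSgen T (by simp)
    have hgenC : IsStrongMetricGen Tᶜ S := hSgen Tᶜ (by simp)
    have hleafpair : ∀ u v : V, u ∉ ({b, c} : Set V) → v ∉ ({b, c} : Set V) → u ≠ v →
        u ∈ S ∨ v ∈ S := by
      intro u v hu hv huv
      simp only [Set.mem_insert_iff, Set.mem_singleton_iff, not_or] at hu hv
      have hlu : leafAt T u b ∨ leafAt T u c := by
        rcases hclass u with h' | h' | h' | h'
        · exact absurd h' hu.1
        · exact absurd h' hu.2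
        · exact Or.inl h'
        · exact Or.inr h'
      have hlv : leafAt T v b ∨ leafAt T v c := by
        rcases hclass v with h' | h' | h' | h'
        · exact absurd h' hv.1
        · exact absurd h' hv.2
        · exact Or.inl h'
        · exact Or.inr h'
      have hmmd : MutuallyMaxDistant T u v :=
        ⟨h.maxdf_leaves hc hd3 hlu hlv huv, h.maxdf_leaves hc hd3 hlv hlu huv.symm⟩
      obtain ⟨w, hwS, hres⟩ := hgenT u v huv
      rcases resolve_mmd hc hmmd hres with rfl | rfl
      · exact Or.inl hwS
      · exact Or.inr hwS
    have hbcpair : b ∈ S ∨ c ∈ S := by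
      obtain ⟨w, hwS, hres⟩ := hgenC b c hbc'
      rcases resolve_mmd hcc (h.mmd_compl_bc hcc) hres with rfl | rfl
      · exact Or.inl hwS
      · exact Or.inr hwS
    -- counting
    set L : Set V := Set.univ \ {b, c} with hL
    have hLcard : L.ncard = Fintype.card V - 2 := by
      rw [hL, Set.ncard_diff (Set.subset_univ _), Set.ncard_univ, Nat.card_eq_fintype_card,
        Set.ncard_pair hbc']
    obtain ⟨z, hzS, hzbc⟩ : ∃ z, z ∈ S ∧ z ∈ ({b, c} : Set V) := by
      rcases hbcpair with h' | h'
      · exact ⟨b, h', by simp⟩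
      · exact ⟨c, h', by simp⟩
    rw [← hScard]
    by_cases hall : ∀ ℓ ∈ L, ℓ ∈ S
    · calc Fintype.card V - 2 = L.ncard := hLcard.symm
        _ ≤ S.ncard := Set.ncard_le_ncard hall (Set.toFinite S)
    · push_neg at hall
      obtain ⟨ℓ₀, hℓ₀L, hℓ₀S⟩ := hall
      have hsub : insert z (L \ {ℓ₀}) ⊆ S := by
        intro a ha
        rcases Set.mem_insert_iff.mp ha with rfl | ⟨haL, hane⟩
        · exact hzS
        · have hane' : a ≠ ℓ₀ := by simpa using hane
          rcases hleafpair a ℓ₀ haL.2 hℓ₀L.2 hane' with h' | h'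
          · exact h'
          · exact absurd h' hℓ₀S
      have hzL : z ∉ L \ {ℓ₀} := by
        intro hz'
        exact hz'.1.2 hzbc
      have hins : (insert z (L \ {ℓ₀})).ncard = (L \ {ℓ₀}).ncard + 1 :=
        Set.ncard_insert_of_notMem hzL (Set.toFinite _)
      have hdiff : (L \ {ℓ₀}).ncard = L.ncard - 1 :=
        Set.ncard_diff_singleton_of_mem hℓ₀L
      calc Fintype.card V - 2 = (insert z (L \ {ℓ₀})).ncard := by
            rw [hins, hdiff, hLcard]; omega
        _ ≤ S.ncard := Set.ncard_le_ncard hsub (Set.toFinite S)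
  exact le_antisymm (Nat.sInf_le hmem) (le_csInf ⟨_, hmem⟩ hlow)
end
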